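/- Let (S_n) be a random walk with i.i.d. increments X_i satisfying E[|X_1|^b] < ∞ for some b > 1, and let m = E[X_1]. Then there exists a constant K = K_b > 0 such that for all n ≥ 1, all y ≥ n^{max(1/b,1/2)} and all x > 0: P(S_n − m·n ≤ −x, min_{1≤i≤n} X_i ≥ −y) ≤ K e^{−x/y}. -/

import Mathlib

set_option maxHeartbeats 1000000
open MeasureTheory ProbabilityTheory Filter Real

lemma aux_exp_le {p u : ℝ} (hp1 : 1 ≤ p) (hp2 : p ≤ 2) (hu : -1 ≤ u) :
    Real.exp (-u) ≤ 1 - u + |u| ^ p := by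
  rcases eq_or_ne u 0 with rfl | hu0
  · simpa using Real.rpow_nonneg (le_refl (0:ℝ)) p
  rcases le_or_gt u 1 with h | h
  · have habs : |u| ≤ 1 := abs_le.2 ⟨hu, h⟩
    have habs' : |(-u)| ≤ 1 := by rwa [abs_neg]
    have h2 := Real.exp_bound habs' (n := 2) (by norm_num)
    have hsum : (∑ i ∈ Finset.range 2, (-u) ^ i / i.factorial) = 1 - u := by
      simp [Finset.sum_range_succ]; ring
    rw [hsum, abs_neg] at h2
    norm_num [Nat.factorial] at h2
    have h3 : Real.exp (-u) ≤ 1 - u + u ^ (2:ℕ) * (3 / 4) := by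
      have := (abs_le.1 h2).2
      linarith
    have hcast : |u| ^ (2:ℝ) = |u| ^ (2:ℕ) := by
      rw [show (2:ℝ) = ((2:ℕ):ℝ) by norm_num, Real.rpow_natCast]
    have hpow : |u| ^ (2:ℝ) ≤ |u| ^ p :=
      Real.rpow_le_rpow_of_exponent_ge (abs_pos.2 hu0) habs hp2
    rw [hcast] at hpow
    nlinarith [sq_nonneg u, sq_abs u]
  · have h1 : Real.exp (-u) ≤ 1 := Real.exp_le_one_iff.2 (by linarith)
    have h2 : u ≤ |u| ^ p := by
      calc u = |u| ^ (1:ℝ) := by rw [Real.rpow_one, abs_of_pos (by linarith)]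
      _ ≤ |u| ^ p := Real.rpow_le_rpow_of_exponent_le (by rw [abs_of_pos] <;> linarith) hp1
    linarith

/-- Lemma 2.1(a) of Denisov–Dieker–Shneer: for a random walk with i.i.d.
increments having finite `b`-th absolute moment (`b > 1`) and mean `m`, there is `K > 0`
such that for all `n ≥ 1`, `y ≥ n^{max(1/b,1/2)}` and `x > 0`,
`P(S_n − m n ≤ −x, min_{1≤i≤n} X_i ≥ −y) ≤ K e^{−x/y}`. -/
theorem rw_lower_deviation_no_big_drop
    {Ω : Type*} [MeasurableSpace Ω] (μ : Measure Ω) [IsProbabilityMeasure μ]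
    (X : ℕ → Ω → ℝ)
    (hmeas : ∀ i, Measurable (X i))
    (hindep : iIndepFun X μ)
    (hident : ∀ i, μ.map (X i) = μ.map (X 0))
    (b : ℝ) (hb : 1 < b)
    (hmom : Integrable (fun ω => |X 0 ω| ^ b) μ)
    (m : ℝ) (hm : m = μ[X 0]) :
    ∃ K > 0, ∀ n : ℕ, 1 ≤ n → ∀ y : ℝ, (n : ℝ) ^ (max (1 / b) (1 / 2)) ≤ y →
      ∀ x : ℝ, 0 < x →
      μ {ω | (∑ i ∈ Finset.range n, X i ω) - m * n ≤ -x ∧ ∀ i < n, -y ≤ X i ω}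
        ≤ ENNReal.ofReal (K * Real.exp (-x / y)) := by
  have hb0 : (0:ℝ) < b := by linarith
  set p : ℝ := min b 2 with hpdef
  have hp1 : 1 ≤ p := le_min hb.le one_le_two
  have hp2 : p ≤ 2 := min_le_right _ _
  have hpb : p ≤ b := min_le_left _ _
  have hp0 : 0 < p := by linarith
  have hXm := hmeas 0
  have hmeas_absp : Measurable fun ω => |X 0 ω| ^ p :=
    (Real.continuous_rpow_const hp0.le).measurable.comp hXm.abs
  have hdom : Integrable (fun ω => 1 + |X 0 ω| ^ b) μ := (integrable_const 1).add hmom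
  have habs_le : ∀ (q : ℝ), 0 < q → q ≤ b → ∀ t : ℝ, |t| ^ q ≤ 1 + |t| ^ b := by
    intro q hq hqb t
    rcases le_or_gt (|t|) 1 with h | h
    · have h1 : |t| ^ q ≤ 1 := Real.rpow_le_one (abs_nonneg t) h hq.le
      have hb' : (0:ℝ) ≤ |t| ^ b := Real.rpow_nonneg (abs_nonneg t) b
      linarith
    · have h1 : |t| ^ q ≤ |t| ^ b := Real.rpow_le_rpow_of_exponent_le h.le hqb
      linarith
  have hintp : Integrable (fun ω => |X 0 ω| ^ p) μ := by
    refine hdom.mono' hmeas_absp.aestronglyMeasurable (Filter.Eventually.of_forall fun ω => ?_)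
    rw [Real.norm_eq_abs, abs_of_nonneg (Real.rpow_nonneg (abs_nonneg _) p)]
    exact habs_le p hp0 hpb _
  have hintX : Integrable (X 0) μ := by
    refine hdom.mono' hXm.aestronglyMeasurable (Filter.Eventually.of_forall fun ω => ?_)
    rw [Real.norm_eq_abs]
    have := habs_le 1 one_pos hb.le (X 0 ω)
    rwa [Real.rpow_one] at this
  set Cp : ℝ := ∫ ω, |X 0 ω| ^ p ∂μ with hCp
  have hCp0 : 0 ≤ Cp := integral_nonneg fun ω => Real.rpow_nonneg (abs_nonneg _) p
  set A : ℝ := Real.exp |m| * Cp with hA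
  have hA0 : 0 ≤ A := mul_nonneg (Real.exp_pos _).le hCp0
  refine ⟨Real.exp A, Real.exp_pos A, ?_⟩
  intro n hn y hy x hx
  have hn1 : (1:ℝ) ≤ (n:ℝ) := by exact_mod_cast hn
  have hnR0 : (0:ℝ) < (n:ℝ) := by linarith
  have hc0 : 0 ≤ max (1/b) (1/2) := le_trans (by norm_num) (le_max_right (1/b) (1/2))
  have hy1 : (1:ℝ) ≤ y := le_trans (Real.one_le_rpow hn1 hc0) hy
  have hy0 : (0:ℝ) < y := by linarith
  have hyn : (n:ℝ) ≤ y ^ p := by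
    have h1 : ((n:ℝ) ^ (max (1/b) (1/2))) ^ p ≤ y ^ p :=
      Real.rpow_le_rpow (Real.rpow_nonneg (by positivity) _) hy hp0.le
    have h2 : ((n:ℝ) ^ (max (1/b) (1/2))) ^ p = (n:ℝ) ^ (max (1/b) (1/2) * p) :=
      (Real.rpow_mul (by positivity) _ _).symm
    have h3 : 1 ≤ max (1/b) (1/2) * p := by
      rcases le_total b 2 with hb2 | hb2
      · have hpe : p = b := min_eq_left hb2
        have hinv : 1/b * b = 1 := by field_simp
        have hle : 1/b ≤ max (1/b) (1/2) := le_max_left _ _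
        nlinarith
      · have hpe : p = 2 := min_eq_right hb2
        have hle : 1/2 ≤ max (1/b) (1/2) := le_max_right _ _
        nlinarith
    have h4 : (n:ℝ) ^ (1:ℝ) ≤ (n:ℝ) ^ (max (1/b) (1/2) * p) :=
      Real.rpow_le_rpow_of_exponent_le hn1 h3
    rw [Real.rpow_one] at h4
    rw [h2] at h1
    linarith
  have hyp0 : (0:ℝ) < y ^ p := lt_of_lt_of_le hnR0 hyn
  -- the auxiliary function g
  set g : ℝ → ℝ := fun v => if -y ≤ v then Real.exp (-v / y) else 0 with hg
  have hg_meas : Measurable g := by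
    apply Measurable.ite (measurableSet_le measurable_const measurable_id)
    · exact (measurable_id.neg.div_const y).exp
    · exact measurable_const
  have hg_nonneg : ∀ v, 0 ≤ g v := by
    intro v; rw [hg]; dsimp only
    split
    · exact (Real.exp_pos _).le
    · exact le_rfl
  have hg_le : ∀ v, g v ≤ Real.exp 1 := by
    intro v; rw [hg]; dsimp only
    split
    · rename_i hv
      apply Real.exp_le_exp.2
      rw [div_le_one hy0]; linarith
    · exact (Real.exp_pos _).le
  have hg_bound : ∀ v, g v ≤ 1 - v / y + |v| ^ p / y ^ p := by
    intro v; rw [hg]; dsimp only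
    have habsy : |v| ^ p / y ^ p = |v / y| ^ p := by
      rw [abs_div, abs_of_pos hy0, Real.div_rpow (abs_nonneg v) hy0.le]
    split
    · rename_i hv
      have hu : -1 ≤ v / y := by
        rw [le_div_iff₀ hy0]; linarith
      have hexp := aux_exp_le hp1 hp2 hu
      rw [habsy, neg_div]
      exact hexp
    · rename_i hv
      push_neg at hv
      have h1 : 1 < -v / y := by
        rw [lt_div_iff₀ hy0]; linarith
      have h2 : (0:ℝ) ≤ |v / y| ^ p := Real.rpow_nonneg (abs_nonneg _) p
      have h3 : -(v/y) = -v/y := by ring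
      rw [habsy]
      rw [h3.symm] at h1
      linarith
  -- composed random variables
  set Y : ℕ → Ω → ℝ := fun i ω => g (X i ω) with hYdef
  have hYmeas : ∀ i, Measurable (Y i) := fun i => hg_meas.comp (hmeas i)
  have hYindep : iIndepFun Y μ :=
    hindep.comp (fun _ => g) (fun _ => hg_meas)
  have hYint : ∀ i, Integrable (Y i) μ := by
    intro i
    refine (integrable_const (Real.exp 1)).mono' (hYmeas i).aestronglyMeasurable
      (Filter.Eventually.of_forall fun ω => ?_)
    rw [Real.norm_eq_abs, abs_of_nonneg (hg_nonneg _)]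
    exact hg_le _
  have hP : ∀ k, (∏ i ∈ Finset.range k, Y i) = fun ω => ∏ i ∈ Finset.range k, Y i ω :=
    fun k => funext fun ω => Finset.prod_apply ω _ _
  have hprod_int : ∀ k, Integrable (fun ω => ∏ i ∈ Finset.range k, Y i ω) μ := by
    intro k
    induction k with
    | zero => simpa using integrable_const (1:ℝ)
    | succ k ih =>
      have hind : IndepFun (∏ i ∈ Finset.range k, Y i) (Y k) μ :=
        hYindep.indepFun_prod_range_succ hYmeas k
      have h2 := hind.integrable_mul ((hP k) ▸ ih) (hYint k)
      have heq : (fun ω => ∏ i ∈ Finset.range (k+1), Y i ω)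
          = (∏ i ∈ Finset.range k, Y i) * Y k := by
        funext ω
        rw [Pi.mul_apply, hP k, Finset.prod_range_succ]
      rw [heq]; exact h2
  have hprod_eq : ∀ k, (∫ ω, ∏ i ∈ Finset.range k, Y i ω ∂μ)
      = ∏ i ∈ Finset.range k, ∫ ω, Y i ω ∂μ := by
    intro k
    induction k with
    | zero => simp
    | succ k ih =>
      have hind : IndepFun (∏ i ∈ Finset.range k, Y i) (Y k) μ :=
        hYindep.indepFun_prod_range_succ hYmeas k
      have hmul := hind.integral_mul_eq_mul_integral ((hP k) ▸ hprod_int k).aestronglyMeasurable (hYint k).aestronglyMeasurable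
      rw [hP k] at hmul
      rw [Finset.prod_range_succ, ← ih]
      simp only [Finset.prod_range_succ]
      exact hmul
  have hident_int : ∀ i, (∫ ω, Y i ω ∂μ) = ∫ ω, Y 0 ω ∂μ := by
    intro i
    have h1 : (∫ ω, Y i ω ∂μ) = ∫ v, g v ∂(μ.map (X i)) :=
      (integral_map (hmeas i).aemeasurable hg_meas.aestronglyMeasurable).symm
    have h2 : (∫ ω, Y 0 ω ∂μ) = ∫ v, g v ∂(μ.map (X 0)) :=
      (integral_map (hmeas 0).aemeasurable hg_meas.aestronglyMeasurable).symm
    rw [h1, h2, hident i]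
  set I0 : ℝ := ∫ ω, Y 0 ω ∂μ with hI0
  have hI0_nonneg : 0 ≤ I0 := integral_nonneg fun ω => hg_nonneg _
  -- single-factor bound
  have hI0_le : I0 ≤ 1 - m / y + Cp / y ^ p := by
    have hint1 : Integrable (fun ω => 1 - X 0 ω / y) μ :=
      (integrable_const (1:ℝ)).sub (hintX.div_const y)
    have hint2 : Integrable (fun ω => |X 0 ω| ^ p / y ^ p) μ := hintp.div_const (y ^ p)
    have hint_rhs : Integrable (fun ω => 1 - X 0 ω / y + |X 0 ω| ^ p / y ^ p) μ :=
      hint1.add hint2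
    have hle : I0 ≤ ∫ ω, (1 - X 0 ω / y + |X 0 ω| ^ p / y ^ p) ∂μ :=
      integral_mono (hYint 0) hint_rhs fun ω => hg_bound (X 0 ω)
    have heval : (∫ ω, (1 - X 0 ω / y + |X 0 ω| ^ p / y ^ p) ∂μ)
        = 1 - m / y + Cp / y ^ p := by
      rw [integral_add hint1 hint2,
        integral_sub (integrable_const (1:ℝ)) (hintX.div_const y),
        integral_div, integral_div, integral_const]
      simp [hm, hCp]
    rw [heval] at hle
    exact hle
  -- tilted single-factor bound
  have hfac : Real.exp (m / y) * I0 ≤ 1 + A / n := by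
    have h1 : Real.exp (m / y) * (1 - m / y) ≤ 1 := by
      have ha : 1 - m / y ≤ Real.exp (-(m / y)) := by
        have := Real.add_one_le_exp (-(m / y)); linarith
      calc Real.exp (m/y) * (1 - m/y) ≤ Real.exp (m/y) * Real.exp (-(m/y)) :=
            mul_le_mul_of_nonneg_left ha (Real.exp_pos _).le
      _ = 1 := by rw [← Real.exp_add]; simp
    have h2 : Real.exp (m / y) ≤ Real.exp |m| := by
      apply Real.exp_le_exp.2
      have h := le_abs_self m
      rw [div_le_iff₀ hy0]
      nlinarith [abs_nonneg m]
    have h3 : Cp / y ^ p ≤ Cp / n :=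
      div_le_div_of_nonneg_left hCp0 hnR0 hyn
    have h4 : Real.exp (m / y) * (Cp / y ^ p) ≤ Real.exp |m| * (Cp / n) := by
      apply mul_le_mul h2 h3 (by positivity) (Real.exp_pos _).le
    have h5 : Real.exp (m / y) * I0
        ≤ Real.exp (m / y) * (1 - m / y) + Real.exp (m / y) * (Cp / y ^ p) := by
      have := mul_le_mul_of_nonneg_left hI0_le (Real.exp_pos (m/y)).le
      nlinarith [this]
    have h6 : A / n = Real.exp |m| * (Cp / n) := by rw [hA]; ring
    rw [h6]
    linarith
  have hnne : (n:ℝ) ≠ 0 := ne_of_gt hnR0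
  have hpow_bound : (Real.exp (m / y) * I0) ^ n ≤ Real.exp A := by
    have hbase0 : 0 ≤ Real.exp (m/y) * I0 := mul_nonneg (Real.exp_pos _).le hI0_nonneg
    have h5 : 1 + A / n ≤ Real.exp (A / n) := by
      have := Real.add_one_le_exp (A/n); linarith
    calc (Real.exp (m/y) * I0)^n ≤ (Real.exp (A/n))^n :=
          pow_le_pow_left₀ hbase0 (hfac.trans h5) n
    _ = Real.exp ((n:ℝ) * (A/n)) := (Real.exp_nat_mul _ n).symm
    _ = Real.exp A := by rw [mul_div_cancel₀ A hnne]
  -- Markov step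
  set f : Ω → ℝ := fun ω => ∏ i ∈ Finset.range n, Y i ω with hf
  set ε : ℝ := Real.exp ((x - m * n) / y) with hε
  have hε0 : 0 < ε := Real.exp_pos _
  set E : Set Ω := {ω | (∑ i ∈ Finset.range n, X i ω) - m * n ≤ -x ∧ ∀ i < n, -y ≤ X i ω}
    with hE
  have hsubset : E ⊆ {ω | ε ≤ f ω} := by
    intro ω hω
    obtain ⟨h1, h2⟩ := hω
    have hfω : f ω = Real.exp (-(∑ i ∈ Finset.range n, X i ω) / y) := by
      have hterm : ∀ i ∈ Finset.range n, Y i ω = Real.exp (-(X i ω) / y) := by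
        intro i hi
        have hxy : -y ≤ X i ω := h2 i (Finset.mem_range.1 hi)
        show g (X i ω) = Real.exp (-(X i ω) / y)
        rw [hg]; dsimp only; rw [if_pos hxy]
      rw [hf]; dsimp only
      rw [Finset.prod_congr rfl hterm, ← Real.exp_sum]
      congr 1
      rw [← Finset.sum_neg_distrib, Finset.sum_div]
    have harg : (x - m * n) / y ≤ -(∑ i ∈ Finset.range n, X i ω) / y := by
      gcongr
      linarith
    show ε ≤ f ω
    rw [hfω, hε]
    exact Real.exp_le_exp.2 harg
  have hf_nonneg : 0 ≤ᵐ[μ] f :=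
    Filter.Eventually.of_forall fun ω => Finset.prod_nonneg fun i _ => hg_nonneg _
  have hmark := mul_meas_ge_le_integral_of_nonneg hf_nonneg (hprod_int n) ε
  have hμE_fin : μ E ≠ ⊤ := measure_ne_top μ E
  have hmono : (μ E).toReal ≤ (μ {ω | ε ≤ f ω}).toReal :=
    ENNReal.toReal_mono (measure_ne_top μ _) (measure_mono hsubset)
  have htoReal : (μ E).toReal ≤ (∫ ω, f ω ∂μ) / ε := by
    rw [le_div_iff₀ hε0]
    calc (μ E).toReal * ε = ε * (μ E).toReal := mul_comm _ _
    _ ≤ ε * (μ {ω | ε ≤ f ω}).toReal := mul_le_mul_of_nonneg_left hmono hε0.le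
    _ ≤ ∫ ω, f ω ∂μ := hmark
  -- evaluate the integral bound
  have hprodI : (∫ ω, f ω ∂μ) = I0 ^ n := by
    rw [hf]; dsimp only
    rw [hprod_eq n, Finset.prod_congr rfl (fun i _ => hident_int i), Finset.prod_const,
      Finset.card_range]
  have harg2 : (n:ℝ) * (m / y) + (-x / y) = -((x - m * (n:ℝ)) / y) := by field_simp; ring
  have hdiv : (∫ ω, f ω ∂μ) / ε = (Real.exp (m / y) * I0) ^ n * Real.exp (-x / y) := by
    rw [hprodI, hε, div_eq_mul_inv, ← Real.exp_neg]
    rw [mul_pow, ← Real.exp_nat_mul, ← harg2, Real.exp_add]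
    ring
  have hfinal : (∫ ω, f ω ∂μ) / ε ≤ Real.exp A * Real.exp (-x / y) := by
    rw [hdiv]
    exact mul_le_mul_of_nonneg_right hpow_bound (Real.exp_pos _).le
  calc μ E = ENNReal.ofReal ((μ E).toReal) := (ENNReal.ofReal_toReal hμE_fin).symm
  _ ≤ ENNReal.ofReal (Real.exp A * Real.exp (-x / y)) :=
      ENNReal.ofReal_le_ofReal (le_trans htoReal hfinal)
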